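/- Lemma 2.3. Let Ω ⊆ ℝ^d be locally polyhedral near a point z̄ ∈ Ω. Then the limiting normal cone satisfies N_Ω(z̄) = ⋃_{w ∈ T_Ω(z̄)} N̂_{T_Ω(z̄)}(w). -/

import Mathlib

open Set Filter Metric Pointwise
open scoped RealInnerProductSpace

noncomputable section

/-- Euclidean `n`-space. -/
abbrev Euc (n : ℕ) : Type := EuclideanSpace ℝ (Fin n)

/-- Bouligand tangent (contingent) cone. -/
def tangCone {E : Type*} [AddCommMonoid E] [SMul ℝ E] [TopologicalSpace E]
    (Ω : Set E) (z : E) : Set E :=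
  {u | ∃ (t : ℕ → ℝ) (w : ℕ → E), (∀ k, 0 < t k) ∧
    Tendsto t atTop (nhds 0) ∧ Tendsto w atTop (nhds u) ∧ ∀ k, z + t k • w k ∈ Ω}

section InnerDefs

variable {E F : Type*} [NormedAddCommGroup E] [InnerProductSpace ℝ E]
  [NormedAddCommGroup F] [InnerProductSpace ℝ F]

/-- Polar cone of a set. -/
def polarCone (S : Set E) : Set E := {x | ∀ u ∈ S, ⟪x, u⟫ ≤ 0}

/-- Fréchet (regular) normal cone. -/
def regNormal (Ω : Set E) (z : E) : Set E := polarCone (tangCone Ω z)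

/-- Mordukhovich (limiting) normal cone. -/
def limNormal (Ω : Set E) (z : E) : Set E :=
  {x | ∃ (zk xk : ℕ → E), (∀ k, zk k ∈ Ω) ∧ Tendsto zk atTop (nhds z) ∧
    (∀ k, xk k ∈ regNormal Ω (zk k)) ∧ Tendsto xk atTop (nhds x)}

/-- Graph of the regular normal cone mapping. -/
def gphRegNormal (Ω : Set E) : Set (E × E) := {p | p.1 ∈ Ω ∧ p.2 ∈ regNormal Ω p.1}

/-- Normal cone (in the sense of convex analysis). -/
def cvxNormal (C : Set E) (z : E) : Set E := {x | ∀ y ∈ C, ⟪x, y - z⟫ ≤ 0}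

/-- Graph of the convex normal cone mapping. -/
def gphCvxNormal (C : Set E) : Set (E × E) := {p | p.1 ∈ C ∧ p.2 ∈ cvxNormal C p.1}

/-- Critical cone `K_C(z,z*) = T_C(z) ∩ [z*]^⊥`. -/
def critCone (C : Set E) (z zs : E) : Set E :=
  tangCone C z ∩ {u | ⟪zs, u⟫ = 0}

/-- Polar cone of a set of pairs (w.r.t. the natural inner product of the product). -/
def polarConeP (S : Set (E × F)) : Set (E × F) :=
  {x | ∀ u ∈ S, ⟪x.1, u.1⟫ + ⟪x.2, u.2⟫ ≤ 0}

/-- Regular normal cone for sets of pairs. -/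
def regNormalP (Ω : Set (E × F)) (z : E × F) : Set (E × F) := polarConeP (tangCone Ω z)

/-- Convex normal cone for sets of pairs. -/
def cvxNormalP (C : Set (E × F)) (z : E × F) : Set (E × F) :=
  {x | ∀ y ∈ C, ⟪x.1, y.1 - z.1⟫ + ⟪x.2, y.2 - z.2⟫ ≤ 0}

/-- Graph of the convex normal cone mapping, for sets of pairs. -/
def gphCvxNormalP (C : Set (E × F)) : Set ((E × F) × (E × F)) :=
  {p | p.1 ∈ C ∧ p.2 ∈ cvxNormalP C p.1}

/-- Critical cone for sets of pairs. -/
def critConeP (C : Set (E × F)) (z zs : E × F) : Set (E × F) :=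
  tangCone C z ∩ {u | ⟪zs.1, u.1⟫ + ⟪zs.2, u.2⟫ = 0}

end InnerDefs

/-- `S⁺ = span (S - S)`, the subspace parallel to the affine hull. -/
def plusSpan {E : Type*} [AddCommGroup E] [Module ℝ E] (S : Set E) : Set E :=
  ↑(Submodule.span ℝ (S - S))

/-- Generalized lineality space: the largest subspace `L` with `C + L ⊆ C`. -/
def linealSpace {E : Type*} [AddCommGroup E] [Module ℝ E] (C : Set E) : Set E :=
  ↑(sSup {L : Submodule ℝ E | C + (L : Set E) ⊆ C})

/-- Metric subregularity of a set-valued map at a point of its graph. -/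
def MetrSubregAt {α β : Type*} [PseudoMetricSpace α] [PseudoMetricSpace β]
    (M : α → Set β) (zb : α) (wb : β) : Prop :=
  ∃ κ > (0:ℝ), ∃ ε > (0:ℝ), ∀ z, dist z zb < ε →
    infDist z {z' | wb ∈ M z'} ≤ κ * infDist wb (M z)

/-- Metric regularity of a set-valued map around a point of its graph. -/
def MetrRegAround {α β : Type*} [PseudoMetricSpace α] [PseudoMetricSpace β]
    (M : α → Set β) (zb : α) (wb : β) : Prop :=
  ∃ κ > (0:ℝ), ∃ ε > (0:ℝ), ∀ z, dist z zb < ε → ∀ w, dist w wb < ε →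
    infDist z {z' | w ∈ M z'} ≤ κ * infDist w (M z)

/-- Convex polyhedral set: finite intersection of closed halfspaces. -/
def ConvexPolyhedral {E : Type*} [NormedAddCommGroup E] [NormedSpace ℝ E]
    (C : Set E) : Prop :=
  ∃ (N : ℕ) (a : Fin N → (E →L[ℝ] ℝ)) (α : Fin N → ℝ), C = {z | ∀ i, a i z ≤ α i}

/-- Polyhedral set: finite union of convex polyhedral sets. -/
def IsPolyhedral {E : Type*} [NormedAddCommGroup E] [NormedSpace ℝ E]
    (C : Set E) : Prop :=
  ∃ (N : ℕ) (Cs : Fin N → Set E), (∀ i, ConvexPolyhedral (Cs i)) ∧ C = ⋃ i, Cs i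

/-- `Ω` coincides with a polyhedral set near `c`. -/
def LocallyPolyhedralNear {E : Type*} [NormedAddCommGroup E] [NormedSpace ℝ E]
    (Ω : Set E) (c : E) : Prop :=
  ∃ W ∈ nhds c, ∃ C, IsPolyhedral C ∧ Ω ∩ W = C ∩ W

/-- A face of a convex set: a convex extreme subset. -/
def IsFace {E : Type*} [AddCommGroup E] [Module ℝ E] (K Fc : Set E) : Prop :=
  Convex ℝ Fc ∧ IsExtreme ℝ K Fc

section MPEC

variable {n m p q : ℕ}

/-- Lower level feasible set `Γ = {y : g(y) ≤ 0}`. -/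
def Gam (g : Euc m → Euc q) : Set (Euc m) := {y | ∀ i, g y i ≤ 0}

/-- Gradient of the `i`-th component of `g` at `yb`. -/
def gradg (g : Euc m → Euc q) (yb : Euc m) (i : Fin q) : Euc m :=
  gradient (fun y => g y i) yb

/-- Hessian of the `i`-th component of `g` at `yb`. -/
def hessg (g : Euc m → Euc q) (yb : Euc m) (i : Fin q) : Euc m →L[ℝ] Euc m :=
  fderiv ℝ (gradient fun y => g y i) yb

/-- `∇²(λᵀg)(yb) v`. -/
def hessLam (g : Euc m → Euc q) (yb : Euc m) (lam : Euc q) (v : Euc m) : Euc m :=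
  ∑ i, lam i • hessg g yb i v

/-- The vector `vᵀ∇²g(yb)w ∈ ℝ^q` with components `vᵀ∇²g_i(yb)w`. -/
def quadg (g : Euc m → Euc q) (yb : Euc m) (v w : Euc m) : Euc q :=
  WithLp.toLp 2 (fun i => ⟪v, hessg g yb i w⟫)

/-- Critical cone `K̄_Γ` of the lower level system at `(yb, ysb)`. -/
def KbarS (g : Euc m → Euc q) (yb ysb : Euc m) : Set (Euc m) :=
  {v | (∀ i, g yb i = 0 → ⟪gradg g yb i, v⟫ ≤ 0) ∧ ⟪ysb, v⟫ = 0}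

/-- Multiplier set `Λ̄`. -/
def LamS (g : Euc m → Euc q) (yb ysb : Euc m) : Set (Euc q) :=
  {lam | (∀ i, 0 ≤ lam i) ∧ (∀ i, g yb i < 0 → lam i = 0) ∧
    ∑ i, lam i • gradg g yb i = ysb}

/-- Directional multiplier set `Λ̄(v)`. -/
def LamDir (g : Euc m → Euc q) (yb ysb : Euc m) (v : Euc m) : Set (Euc q) :=
  {lam | lam ∈ LamS g yb ysb ∧
    ∀ mu ∈ LamS g yb ysb, ⟪v, hessLam g yb mu v⟫ ≤ ⟪v, hessLam g yb lam v⟫}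

/-- `g` is 2-nondegenerate in direction `vb` at `(yb, ysb)`. -/
def TwoNondeg (g : Euc m → Euc q) (yb ysb vb : Euc m) : Prop :=
  ∀ mu : Euc q, hessLam g yb mu vb ∈ plusSpan (cvxNormal (KbarS g yb ysb) vb) →
    mu ∈ plusSpan (LamDir g yb ysb vb) → mu = 0

/-- Strict complementarity index set `J̄⁺(λ)` . -/
def JplusLam (g : Euc m → Euc q) (yb : Euc m) (lam : Euc q) : Set (Fin q) :=
  {i | g yb i = 0 ∧ 0 < lam i}

/-- `J̄⁺(Ξ) = ⋃_{λ ∈ Ξ} J̄⁺(λ)`. -/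
def JplusSet (g : Euc m → Euc q) (yb : Euc m) (Xi : Set (Euc q)) : Set (Fin q) :=
  ⋃ lam ∈ Xi, JplusLam g yb lam

/-- Active index set `Ī(v)`. -/
def IbarV (g : Euc m → Euc q) (yb : Euc m) (v : Euc m) : Set (Fin q) :=
  {i | g yb i = 0 ∧ ⟪gradg g yb i, v⟫ = 0}

/-- The set-valued map `y ⇒ g(y) − ℝ^q_-`. -/
def lowerMap (g : Euc m → Euc q) (y : Euc m) : Set (Euc q) :=
  {w | ∃ c : Euc q, (∀ i, c i ≤ 0) ∧ w = g y - c}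

/-- MPEC feasible set. -/
def MPECfeas (φ : Euc n × Euc m → Euc m) (G : Euc n × Euc m → Euc p)
    (g : Euc m → Euc q) : Set (Euc n × Euc m) :=
  {z | -φ z ∈ regNormal (Gam g) z.2 ∧ ∀ i, G z i ≤ 0}

/-- `(xb,yb)` is a local minimizer of (MPEC). -/
def IsLocalMinMPEC (Fobj : Euc n × Euc m → ℝ) (φ : Euc n × Euc m → Euc m)
    (G : Euc n × Euc m → Euc p) (g : Euc m → Euc q) (zb : Euc n × Euc m) : Prop :=
  zb ∈ MPECfeas φ G g ∧
    ∃ ε > (0:ℝ), ∀ z ∈ MPECfeas φ G g, dist z zb < ε → Fobj zb ≤ Fobj z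

/-- The constraint map `P(x,y) = ((y, −φ(x,y)), G(x,y))`. -/
def Pmp (φ : Euc n × Euc m → Euc m) (G : Euc n × Euc m → Euc p)
    (z : Euc n × Euc m) : (Euc m × Euc m) × Euc p := ((z.2, -φ z), G z)

/-- The constraint set `D = gph N̂_Γ × ℝ^p_-`. -/
def Dmp (g : Euc m → Euc q) : Set ((Euc m × Euc m) × Euc p) :=
  (gphRegNormal (Gam g)) ×ˢ {a : Euc p | ∀ i, a i ≤ 0}

/-- The linearization `∇P(zb)(u,v)`. -/
def DPmp (φ : Euc n × Euc m → Euc m) (G : Euc n × Euc m → Euc p)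
    (zb uv : Euc n × Euc m) : (Euc m × Euc m) × Euc p :=
  ((uv.2, -(fderiv ℝ φ zb uv)), fderiv ℝ G zb uv)

/-- The generalized Guignard constraint qualification at `zb` for the system `P(x,y) ∈ D`. -/
def GGCQmp (φ : Euc n × Euc m → Euc m) (G : Euc n × Euc m → Euc p)
    (g : Euc m → Euc q) (zb : Euc n × Euc m) : Prop :=
  regNormalP {z | Pmp φ G z ∈ Dmp (p := p) g} zb
    = polarConeP {uv | DPmp φ G zb uv ∈ tangCone (Dmp (p := p) g) (Pmp φ G zb)}

/-- The linearized set-valued map `(u,v) ⇒ ∇P(zb)(u,v) − T_D(P(zb))`. -/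
def linMap (φ : Euc n × Euc m → Euc m) (G : Euc n × Euc m → Euc p)
    (g : Euc m → Euc q) (zb uv : Euc n × Euc m) : Set ((Euc m × Euc m) × Euc p) :=
  {w | ∃ d ∈ tangCone (Dmp (p := p) g) (Pmp φ G zb), w = DPmp φ G zb uv - d}

/-- The defining property of the set `Σ(vb, vsb)` of extreme points of `Λ̄(vb)`. -/
def SigmaOK (g : Euc m → Euc q) (yb ysb : Euc m) (Sig : Set (Euc q))
    (vb vsb : Euc m) : Prop :=
  Sig.Nonempty ∧ Sig ⊆ Set.extremePoints ℝ (LamDir g yb ysb vb) ∧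
  ∀ u ∈ critCone (KbarS g yb ysb) vb vsb,
    ∃ β₀ > (0:ℝ), ∀ β : ℝ, 0 < β → β < β₀ →
      (Sig ∩ LamDir g yb ysb (vb + β • u)).Nonempty

end MPEC

namespace Lemma23

open Filter Set Metric
open scoped RealInnerProductSpace

variable {E : Type*} [NormedAddCommGroup E] [InnerProductSpace ℝ E]

lemma mem_tangCone_of_eventually {Ω : Set E} {z u : E} (t : ℕ → ℝ) (w : ℕ → E)
    (ht0 : ∀ k, 0 < t k) (ht : Tendsto t atTop (nhds 0)) (hw : Tendsto w atTop (nhds u))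
    (h : ∀ᶠ k in atTop, z + t k • w k ∈ Ω) : u ∈ tangCone Ω z := by
  obtain ⟨M, hM⟩ := eventually_atTop.1 h
  exact ⟨fun k => t (k + M), fun k => w (k + M), fun k => ht0 _,
    ht.comp (tendsto_add_atTop_nat M), hw.comp (tendsto_add_atTop_nat M),
    fun k => hM _ (Nat.le_add_left M k)⟩

lemma seq_tendsto (z : E) {u : E} {t : ℕ → ℝ} {w : ℕ → E}
    (ht : Tendsto t atTop (nhds 0)) (hw : Tendsto w atTop (nhds u)) :
    Tendsto (fun k => z + t k • w k) atTop (nhds z) := by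
  have h1 : Tendsto (fun k => t k • w k) atTop (nhds ((0:ℝ) • u)) := ht.smul hw
  rw [zero_smul] at h1
  simpa using tendsto_const_nhds.add h1

lemma tangCone_subset_of_eventually {Ω Ω' : Set E} {z : E}
    (h : ∀ᶠ z' in nhds z, z' ∈ Ω → z' ∈ Ω') : tangCone Ω z ⊆ tangCone Ω' z := by
  rintro u ⟨t, w, ht0, ht, hw, hmem⟩
  have h2 := (seq_tendsto z ht hw).eventually h
  exact mem_tangCone_of_eventually t w ht0 ht hw (h2.mono fun k hk => hk (hmem k))

lemma tangCone_congr {Ω Ω' : Set E} {z : E}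
    (h : ∀ᶠ z' in nhds z, z' ∈ Ω ↔ z' ∈ Ω') : tangCone Ω z = tangCone Ω' z :=
  Set.Subset.antisymm (tangCone_subset_of_eventually (h.mono fun _ h => h.1))
    (tangCone_subset_of_eventually (h.mono fun _ h => h.2))

lemma tangCone_translate (K : Set E) (zb w : E) :
    tangCone {z | z - zb ∈ K} (zb + w) = tangCone K w := by
  ext u
  constructor
  · rintro ⟨t, v, ht0, ht, hv, hmem⟩
    refine ⟨t, v, ht0, ht, hv, fun k => ?_⟩
    have h1 : (zb + w + t k • v k) - zb ∈ K := hmem k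
    have h2 : (zb + w + t k • v k) - zb = w + t k • v k := by abel
    rwa [h2] at h1
  · rintro ⟨t, v, ht0, ht, hv, hmem⟩
    refine ⟨t, v, ht0, ht, hv, fun k => ?_⟩
    show (zb + w + t k • v k) - zb ∈ K
    have h2 : (zb + w + t k • v k) - zb = w + t k • v k := by abel
    rw [h2]
    exact hmem k

lemma tangCone_smul_subset {K : Set E} (hK : ∀ c : ℝ, 0 < c → ∀ u ∈ K, c • u ∈ K)
    {c : ℝ} (hc : 0 < c) (w : E) : tangCone K (c • w) ⊆ tangCone K w := by
  rintro u ⟨t, v, ht0, ht, hv, hmem⟩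
  refine ⟨fun k => c⁻¹ * t k, v, fun k => mul_pos (inv_pos.2 hc) (ht0 k), ?_, hv, fun k => ?_⟩
  · simpa using ht.const_mul c⁻¹
  · have h1 := hK c⁻¹ (inv_pos.2 hc) _ (hmem k)
    rw [smul_add, smul_smul, smul_smul, inv_mul_cancel₀ hc.ne', one_smul] at h1
    exact h1

lemma tangCone_smul_eq {K : Set E} (hK : ∀ c : ℝ, 0 < c → ∀ u ∈ K, c • u ∈ K)
    {c : ℝ} (hc : 0 < c) (w : E) : tangCone K (c • w) = tangCone K w := by
  refine Set.Subset.antisymm (tangCone_smul_subset hK hc w) ?_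
  have h1 := tangCone_smul_subset hK (inv_pos.2 hc) (c • w)
  rwa [inv_smul_smul₀ hc.ne'] at h1

lemma isClosed_polarCone (S : Set E) : IsClosed (polarCone S) := by
  have h : polarCone S = ⋂ u ∈ S, {x : E | ⟪x, u⟫ ≤ 0} := by
    ext x; simp [polarCone]
  rw [h]
  exact isClosed_biInter fun u _ =>
    isClosed_le (Continuous.inner continuous_id continuous_const) continuous_const

lemma tangCone_zero_of_cone {K : Set E} (hclosed : IsClosed K)
    (hcone : ∀ c : ℝ, 0 < c → ∀ u ∈ K, c • u ∈ K) : tangCone K 0 = K := by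
  ext u
  constructor
  · rintro ⟨t, v, ht0, ht, hv, hmem⟩
    refine hclosed.mem_of_tendsto hv (Eventually.of_forall fun k => ?_)
    have h1 := hmem k
    rw [zero_add] at h1
    have h2 := hcone (t k)⁻¹ (inv_pos.2 (ht0 k)) _ h1
    rwa [inv_smul_smul₀ (ht0 k).ne'] at h2
  · intro hu
    refine ⟨fun k => 1 / ((k : ℝ) + 1), fun _ => u, fun k => by positivity,
      tendsto_one_div_add_atTop_nhds_zero_nat, tendsto_const_nhds, fun k => ?_⟩
    rw [zero_add]
    exact hcone _ (by positivity) _ hu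

section Poly

variable {M : ℕ} {Nn : Fin M → ℕ} (a : ∀ i : Fin M, Fin (Nn i) → (E →L[ℝ] ℝ))
  (α : ∀ i, Fin (Nn i) → ℝ) (zb : E)

/-- The `i`-th convex polyhedron. -/
def cP (i : Fin M) : Set E := {z | ∀ j, a i j z ≤ α i j}

/-- The cone of active constraints of the `i`-th polyhedron at `zb`. -/
def kP (i : Fin M) : Set E := {u | ∀ j, a i j zb = α i j → a i j u ≤ 0}

/-- The local cone of the union at `zb`. -/
def KK : Set E := ⋃ i, {u | zb ∈ cP a α i ∧ u ∈ kP a α zb i}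

lemma isClosed_cP (i : Fin M) : IsClosed (cP a α i) := by
  have h : cP a α i = ⋂ j, {z | a i j z ≤ α i j} := by ext z; simp [cP]
  rw [h]
  exact isClosed_iInter fun j => isClosed_le (a i j).continuous continuous_const

lemma isClosed_kP (i : Fin M) : IsClosed (kP a α zb i) := by
  have h : kP a α zb i = ⋂ j, {u | a i j zb = α i j → a i j u ≤ 0} := by ext z; simp [kP]
  rw [h]
  refine isClosed_iInter fun j => ?_
  by_cases hj : a i j zb = α i j
  · simpa [hj] using isClosed_le (a i j).continuous continuous_const
  · simp [hj]

lemma isClosed_KK : IsClosed (KK a α zb) := by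
  refine isClosed_iUnion_of_finite fun i => ?_
  by_cases h : zb ∈ cP a α i
  · have he : {u | zb ∈ cP a α i ∧ u ∈ kP a α zb i} = kP a α zb i := by ext u; simp [h]
    rw [he]; exact isClosed_kP a α zb i
  · have he : {u | zb ∈ cP a α i ∧ u ∈ kP a α zb i} = ∅ := by ext u; simp [h]
    rw [he]; exact isClosed_empty

lemma KK_smul {c : ℝ} (hc : 0 < c) {u : E} (hu : u ∈ KK a α zb) : c • u ∈ KK a α zb := by
  rw [KK, mem_iUnion] at hu ⊢
  obtain ⟨i, hzbi, hui⟩ := hu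
  refine ⟨i, hzbi, fun j hj => ?_⟩
  rw [map_smul, smul_eq_mul]
  exact mul_nonpos_iff.2 (Or.inl ⟨hc.le, hui j hj⟩)

lemma local_iff {Ω W : Set E} (hW : W ∈ nhds zb)
    (hΩW : Ω ∩ W = (⋃ i, cP a α i) ∩ W) :
    ∀ᶠ z in nhds zb, (z ∈ Ω ↔ z - zb ∈ KK a α zb) := by
  have hi : ∀ i : Fin M, ∀ᶠ z in nhds zb,
      (z ∈ cP a α i ↔ (zb ∈ cP a α i ∧ z - zb ∈ kP a α zb i)) := by
    intro i
    by_cases hzbi : zb ∈ cP a α i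
    · have hev : ∀ᶠ z in nhds zb, ∀ j, a i j zb < α i j → a i j z < α i j := by
        rw [eventually_all]
        intro j
        by_cases hj : a i j zb < α i j
        · exact (((a i j).continuous.tendsto zb).eventually_lt_const hj).mono
            (fun z hz _ => hz)
        · exact Eventually.of_forall fun z h => absurd h hj
      refine hev.mono fun z hz => ?_
      constructor
      · intro hzC
        refine ⟨hzbi, fun j hj => ?_⟩
        rw [map_sub]
        have h1 := hzC j
        have h2 : a i j zb = α i j := hj
        linarith
      · rintro ⟨-, hk⟩ j
        rcases lt_or_eq_of_le (hzbi j) with h | h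
        · exact (hz j h).le
        · have h1 := hk j h
          rw [map_sub] at h1
          linarith
    · have hne : ∀ᶠ z in nhds zb, z ∉ cP a α i := by
        rw [eventually_iff]
        exact (isClosed_cP a α i).isOpen_compl.mem_nhds hzbi
      exact hne.mono fun z hz => by simp [hz, hzbi]
  have hall := eventually_all.2 hi
  have hWev : ∀ᶠ z in nhds zb, z ∈ W := eventually_iff.2 hW
  filter_upwards [hall, hWev] with z hz hzW
  have hC : z ∈ Ω ↔ z ∈ ⋃ i, cP a α i := by
    constructor
    · intro h
      have h1 : z ∈ (⋃ i, cP a α i) ∩ W := hΩW ▸ Set.mem_inter h hzW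
      exact h1.1
    · intro h
      have h1 : z ∈ (⋃ i, cP a α i) ∩ W := ⟨h, hzW⟩
      rw [← hΩW] at h1
      exact h1.1
  rw [hC, KK]
  simp only [mem_iUnion, mem_setOf_eq]
  constructor
  · rintro ⟨i, hi'⟩; exact ⟨i, (hz i).1 hi'⟩
  · rintro ⟨i, hi'⟩; exact ⟨i, (hz i).2 hi'⟩

/-- Tangent-cone candidate determined by combinatorial data. -/
def TCd (b : ∀ i : Fin M, Prop × (Fin (Nn i) → Prop)) : Set E :=
  ⋃ i, {u | (zb ∈ cP a α i ∧ (b i).1) ∧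
    ∀ j, a i j zb = α i j → (b i).2 j → a i j u ≤ 0}

/-- Combinatorial data of a point with respect to the polyhedral cone `KK`. -/
def dataOf (w : E) : ∀ i : Fin M, Prop × (Fin (Nn i) → Prop) :=
  fun i => (w ∈ kP a α zb i, fun j => a i j w = 0)

lemma tangCone_KK_eq (w : E) :
    tangCone (KK a α zb) w = TCd a α zb (dataOf a α zb w) := by
  ext u
  constructor
  · rintro ⟨t, v, ht0, ht, hv, hmem⟩
    by_contra hu
    rw [TCd] at hu
    simp only [mem_iUnion, mem_setOf_eq, not_exists] at hu
    have hev : ∀ᶠ k in atTop, ∀ i : Fin M,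
        w + t k • v k ∉ {u | zb ∈ cP a α i ∧ u ∈ kP a α zb i} := by
      rw [eventually_all]
      intro i
      by_cases hci : zb ∈ cP a α i
      · by_cases hki : w ∈ kP a α zb i
        · -- extract a violated constraint
          have hj : ∃ j, a i j zb = α i j ∧ a i j w = 0 ∧ 0 < a i j u := by
            by_contra hno
            push_neg at hno
            exact hu i ⟨⟨hci, hki⟩, fun j h1 h2 => by
              rcases lt_or_ge 0 (a i j u) with h | h
              · exact absurd h (by simpa using (hno j h1 h2).not_gt)
              · exact h⟩
          obtain ⟨j, hact, hw0, hupos⟩ := hj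
          have htend : Tendsto (fun k => a i j (v k)) atTop (nhds (a i j u)) :=
            ((a i j).continuous.tendsto u).comp hv
          have hevj : ∀ᶠ k in atTop, 0 < a i j (v k) :=
            htend.eventually_const_lt hupos
          refine hevj.mono fun k hk hmem' => ?_
          have h1 : a i j (w + t k • v k) ≤ 0 := hmem'.2 j hact
          rw [map_add, map_smul, smul_eq_mul, hw0, zero_add] at h1
          have h2 : 0 < t k * a i j (v k) := mul_pos (ht0 k) hk
          linarith
        · have hop : ∀ᶠ x in nhds w, x ∉ kP a α zb i := by
            rw [eventually_iff]
            exact (isClosed_kP a α zb i).isOpen_compl.mem_nhds hki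
          have := (seq_tendsto w ht hv).eventually hop
          exact this.mono fun k hk hmem' => hk hmem'.2
      · exact Eventually.of_forall fun k hmem' => hci hmem'.1
    obtain ⟨k, hk⟩ := (hev.and (Eventually.of_forall hmem)).exists
    have h2 := hk.2
    rw [KK, mem_iUnion] at h2
    obtain ⟨i, hi2⟩ := h2
    exact hk.1 i hi2
  · intro hu
    rw [TCd] at hu
    simp only [mem_iUnion, mem_setOf_eq] at hu
    obtain ⟨i, ⟨hci, hki⟩, hj⟩ := hu
    have hev : ∀ᶠ s in nhdsWithin (0:ℝ) (Set.Ioi 0), w + s • u ∈ kP a α zb i := by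
      have hpos : ∀ᶠ s in nhdsWithin (0:ℝ) (Set.Ioi 0), (0:ℝ) < s :=
        eventually_mem_nhdsWithin.mono fun s hs => Set.mem_Ioi.1 hs
      have hallj : ∀ j : Fin (Nn i), ∀ᶠ s in nhdsWithin (0:ℝ) (Set.Ioi 0),
          a i j zb = α i j → a i j (w + s • u) ≤ 0 := by
        intro j
        by_cases hact : a i j zb = α i j
        · by_cases hw0 : a i j w = 0
          · refine hpos.mono fun s hs _ => ?_
            rw [map_add, map_smul, smul_eq_mul, hw0, zero_add]
            exact mul_nonpos_iff.2 (Or.inl ⟨hs.le, hj j hact hw0⟩)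
          · have hwneg : a i j w < 0 := lt_of_le_of_ne (hki j hact) hw0
            have htend : Tendsto (fun s : ℝ => a i j (w + s • u)) (nhdsWithin 0 (Set.Ioi 0))
                (nhds (a i j w)) := by
              have hc : Continuous (fun s : ℝ => a i j (w + s • u)) := by
                exact (a i j).continuous.comp (continuous_const.add (continuous_id.smul
                  continuous_const))
              have h5 : Tendsto (fun s : ℝ => a i j (w + s • u))
                  (nhdsWithin (0:ℝ) (Set.Ioi 0)) (nhds (a i j (w + (0:ℝ) • u))) :=
                (hc.tendsto 0).mono_left nhdsWithin_le_nhds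
              simpa using h5
            exact (htend.eventually_lt_const hwneg).mono fun s hs _ => hs.le
        · exact Eventually.of_forall fun s h => absurd h hact
      rw [kP]
      have := eventually_all.2 hallj
      exact this.mono fun s hs => hs
    have hseq : Tendsto (fun k : ℕ => 1 / ((k : ℝ) + 1)) atTop
        (nhdsWithin (0:ℝ) (Set.Ioi 0)) := by
      rw [tendsto_nhdsWithin_iff]
      exact ⟨tendsto_one_div_add_atTop_nhds_zero_nat,
        Eventually.of_forall fun k => Set.mem_Ioi.2 (by positivity)⟩
    have hevk : ∀ᶠ k : ℕ in atTop, w + (1 / ((k : ℝ) + 1)) • u ∈ KK a α zb := by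
      refine (hseq.eventually hev).mono fun k hk => ?_
      rw [KK, mem_iUnion]
      exact ⟨i, hci, hk⟩
    exact mem_tangCone_of_eventually _ (fun _ => u) (fun k => by positivity)
      tendsto_one_div_add_atTop_nhds_zero_nat tendsto_const_nhds hevk

lemma regNormal_KK_eq (w : E) :
    regNormal (KK a α zb) w = polarCone (TCd a α zb (dataOf a α zb w)) := by
  rw [regNormal, tangCone_KK_eq]

end Poly

lemma regNormal_eq_of_ball {Ω : Set E} {zb : E} {r : ℝ} {K : Set E}
    (hiff : ∀ z ∈ ball zb r, (z ∈ Ω ↔ z - zb ∈ K))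
    {z : E} (hz : z ∈ ball zb r) : regNormal Ω z = regNormal K (z - zb) := by
  have h1 : tangCone Ω z = tangCone {z' | z' - zb ∈ K} z := by
    apply tangCone_congr
    filter_upwards [isOpen_ball.mem_nhds hz] with z' hz'
    exact hiff z' hz'
  have h2 := tangCone_translate K zb (z - zb)
  have h3 : zb + (z - zb) = z := by abel
  rw [h3] at h2
  rw [regNormal, regNormal, h1, h2]

theorem main_aux {M : ℕ} {Nn : Fin M → ℕ} (a : ∀ i : Fin M, Fin (Nn i) → (E →L[ℝ] ℝ))
    (α : ∀ i, Fin (Nn i) → ℝ) (Ω W : Set E) (zb : E) (hzb : zb ∈ Ω)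
    (hW : W ∈ nhds zb) (hΩW : Ω ∩ W = (⋃ i, cP a α i) ∩ W) :
    limNormal Ω zb = ⋃ w ∈ tangCone Ω zb, regNormal (tangCone Ω zb) w := by
  have hKclosed : IsClosed (KK a α zb) := isClosed_KK a α zb
  have hKcone : ∀ c : ℝ, 0 < c → ∀ u ∈ KK a α zb, c • u ∈ KK a α zb :=
    fun c hc u hu => KK_smul a α zb hc hu
  have hloc := local_iff a α zb hW hΩW
  obtain ⟨r, hr, hball⟩ := Metric.eventually_nhds_iff_ball.1 hloc
  have hT : tangCone Ω zb = KK a α zb := by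
    have h1 : tangCone Ω zb = tangCone {z | z - zb ∈ KK a α zb} zb := tangCone_congr hloc
    have h2 := tangCone_translate (KK a α zb) zb 0
    rw [add_zero] at h2
    rw [h1, h2, tangCone_zero_of_cone hKclosed hKcone]
  rw [hT]
  ext x
  simp only [mem_iUnion]
  constructor
  · rintro ⟨zk, xk, hzkΩ, hzk, hxk, hxkt⟩
    have hev : ∀ᶠ k in atTop, zk k ∈ ball zb r :=
      hzk.eventually_mem (isOpen_ball.mem_nhds (mem_ball_self hr))
    obtain ⟨Nt, hNt⟩ := eventually_atTop.1 hev
    have hballk : ∀ k : ℕ, zk (k + Nt) ∈ ball zb r := fun k => hNt _ (Nat.le_add_left _ _)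
    have hwK : ∀ k : ℕ, zk (k + Nt) - zb ∈ KK a α zb := fun k =>
      (hball _ (hballk k)).1 (hzkΩ _)
    have hxkK : ∀ k : ℕ, xk (k + Nt) ∈ regNormal (KK a α zb) (zk (k + Nt) - zb) := fun k => by
      rw [← regNormal_eq_of_ball (fun z hz => hball z hz) (hballk k)]
      exact hxk (k + Nt)
    obtain ⟨b, hb⟩ := Finite.exists_infinite_fiber
      (fun k : ℕ => dataOf a α zb (zk (k + Nt) - zb))
    have hbinf : {k : ℕ | dataOf a α zb (zk (k + Nt) - zb) = b}.Infinite := by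
      rw [← Set.infinite_coe_iff]
      exact hb
    obtain ⟨k0, hk0⟩ := hbinf.nonempty
    have hk0' : dataOf a α zb (zk (k0 + Nt) - zb) = b := hk0
    refine ⟨zk (k0 + Nt) - zb, hwK k0, ?_⟩
    have hclosed : IsClosed (regNormal (KK a α zb) (zk (k0 + Nt) - zb)) := by
      rw [regNormal_KK_eq]
      exact isClosed_polarCone _
    have hfreq : ∃ᶠ k in atTop,
        xk (k + Nt) ∈ regNormal (KK a α zb) (zk (k0 + Nt) - zb) := by
      rw [Filter.frequently_atTop]
      intro n
      obtain ⟨m, hm, hmn⟩ := hbinf.exists_gt n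
      have hm' : dataOf a α zb (zk (m + Nt) - zb) = b := hm
      refine ⟨m, hmn.le, ?_⟩
      have heq : regNormal (KK a α zb) (zk (m + Nt) - zb)
          = regNormal (KK a α zb) (zk (k0 + Nt) - zb) := by
        rw [regNormal_KK_eq, regNormal_KK_eq, hm', hk0']
      rw [← heq]
      exact hxkK m
    have hcl := mem_closure_of_frequently_of_tendsto hfreq
      (hxkt.comp (tendsto_add_atTop_nat Nt))
    rwa [hclosed.closure_eq] at hcl
  · rintro ⟨w, hw, hx⟩
    set s : ℕ → ℝ := fun k => r / ((‖w‖ + 1) * 2) * (1 / ((k : ℝ) + 1)) with hsdef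
    have hs0 : ∀ k, 0 < s k := fun k => by positivity
    have hk1 : ∀ k : ℕ, (1:ℝ) ≤ (k : ℝ) + 1 := fun k => by
      have h0 : (0:ℝ) ≤ (k : ℝ) := Nat.cast_nonneg k
      linarith
    have hsmall : ∀ k, s k * ‖w‖ < r := by
      intro k
      have hw0 : (0:ℝ) ≤ ‖w‖ := norm_nonneg w
      have h1 : s k ≤ r / ((‖w‖ + 1) * 2) := by
        rw [hsdef]
        have h2 : 1 / ((k : ℝ) + 1) ≤ 1 := by
          rw [div_le_one (by positivity)]
          exact hk1 k
        nlinarith [div_pos hr (show (0:ℝ) < (‖w‖ + 1) * 2 by positivity)]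
      have h3 : r / ((‖w‖ + 1) * 2) * ‖w‖ < r := by
        rw [div_mul_eq_mul_div, div_lt_iff₀ (by positivity)]
        nlinarith
      calc s k * ‖w‖ ≤ r / ((‖w‖ + 1) * 2) * ‖w‖ := by nlinarith [hs0 k]
        _ < r := h3
    have hmemball : ∀ k, zb + s k • w ∈ ball zb r := by
      intro k
      rw [mem_ball, dist_self_add_left, norm_smul,
        Real.norm_eq_abs, abs_of_pos (hs0 k)]
      exact hsmall k
    have hmemΩ : ∀ k, zb + s k • w ∈ Ω := by
      intro k
      rw [hball _ (hmemball k)]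
      have h4 : zb + s k • w - zb = s k • w := by abel
      rw [h4]
      exact hKcone _ (hs0 k) _ hw
    have hst : Tendsto s atTop (nhds 0) := by
      rw [hsdef]
      have := tendsto_one_div_add_atTop_nhds_zero_nat.const_mul (r / ((‖w‖ + 1) * 2))
      simpa using this
    refine ⟨fun k => zb + s k • w, fun _ => x, hmemΩ, ?_, ?_, tendsto_const_nhds⟩
    · have h5 : Tendsto (fun k => s k • w) atTop (nhds ((0:ℝ) • w)) := hst.smul_const w
      rw [zero_smul] at h5
      simpa using tendsto_const_nhds.add h5
    · intro k
      rw [regNormal_eq_of_ball (fun z hz => hball z hz) (hmemball k)]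
      have h4 : zb + s k • w - zb = s k • w := by abel
      rw [h4, regNormal, tangCone_smul_eq hKcone (hs0 k)]
      exact hx

end Lemma23

theorem limNormal_eq_iUnion_regNormal_tangCone_of_locallyPolyhedral'
    {d : ℕ} (Ω : Set (Euc d)) (zb : Euc d) (hzb : zb ∈ Ω)
    (hpoly : LocallyPolyhedralNear Ω zb) :
    limNormal Ω zb = ⋃ w ∈ tangCone Ω zb, regNormal (tangCone Ω zb) w := by
  obtain ⟨W, hW, C, ⟨M, Cs, hCs, rfl⟩, hΩW⟩ := hpoly
  choose Nn aa αα hCs' using hCs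
  have hC : (⋃ i, Cs i) = ⋃ i, Lemma23.cP aa αα i := by
    apply Set.iUnion_congr
    intro i
    rw [hCs' i]
    rfl
  rw [hC] at hΩW
  exact Lemma23.main_aux aa αα Ω W zb hzb hW hΩW


/-- **Lemma 2.3.** If `Ω` is locally polyhedral near `z̄ ∈ Ω`, then the limiting normal cone
equals the union of the regular normal cones to the tangent cone at its points. -/
theorem limNormal_eq_iUnion_regNormal_tangCone_of_locallyPolyhedral
    {d : ℕ} (Ω : Set (Euc d)) (zb : Euc d) (hzb : zb ∈ Ω)
    (hpoly : LocallyPolyhedralNear Ω zb) :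
    limNormal Ω zb = ⋃ w ∈ tangCone Ω zb, regNormal (tangCone Ω zb) w :=
  limNormal_eq_iUnion_regNormal_tangCone_of_locallyPolyhedral' Ω zb hzb hpoly
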